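/- arXiv:2401.13300 — 2 statements merged into one kernel-verified Lean document; each statement's English description precedes it below -/
import Mathlib

section
/- Let a > 0 and ρ : [0,1] → ℝ satisfy C⁻¹ x^a ≤ ρ(x) ≤ C x^a for some C > 0 and all x ∈ [0,1]. Then for every γ > a/(a+1) and every ε > 0, the series ∑_{k≥1} ∫₀¹ ρ(x) e^{−ε k^γ ρ(x)} dx converges. -/
open MeasureTheory Real

/-- Auxiliary: `u ^ q * exp (-u)` is bounded for `u ≥ 0`. -/
lemma aux_rpow_mul_exp_neg_le (q : ℝ) (hq : 0 ≤ q) :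
    ∃ M : ℝ, 0 < M ∧ ∀ u : ℝ, 0 ≤ u → u ^ q * Real.exp (-u) ≤ M := by
  refine ⟨(Nat.factorial (Nat.ceil q) : ℝ), by positivity, fun u hu => ?_⟩
  rcases le_total u 1 with h1 | h1
  · have h2 : u ^ q ≤ 1 := Real.rpow_le_one hu h1 hq
    have h3 : Real.exp (-u) ≤ 1 := Real.exp_le_one_iff.mpr (by linarith)
    calc u ^ q * Real.exp (-u) ≤ 1 * 1 :=
          mul_le_mul h2 h3 (Real.exp_pos _).le zero_le_one
      _ ≤ (Nat.factorial (Nat.ceil q) : ℝ) := by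
          exact_mod_cast Nat.one_le_iff_ne_zero.mpr (Nat.factorial_ne_zero _)
  · set n := Nat.ceil q with hn
    have h2 : u ^ q ≤ u ^ (n : ℕ) := by
      rw [← Real.rpow_natCast u n]
      exact Real.rpow_le_rpow_of_exponent_le h1 (Nat.le_ceil q)
    have h3 : u ^ (n : ℕ) ≤ (Nat.factorial n : ℝ) * Real.exp u := by
      have := Real.pow_div_factorial_le_exp (x := u) (le_trans zero_le_one h1) n
      rw [div_le_iff₀ (by positivity)] at this
      linarith [this]
    calc u ^ q * Real.exp (-u) ≤ ((Nat.factorial n : ℝ) * Real.exp u) * Real.exp (-u) :=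
          mul_le_mul_of_nonneg_right (le_trans h2 h3) (Real.exp_pos _).le
      _ = (Nat.factorial n : ℝ) := by rw [mul_assoc, ← Real.exp_add]; simp

theorem summability_for_vanishing_density
    (C a : ℝ) (hC : 0 < C) (ha : 0 < a)
    (ρ : ℝ → ℝ) (hmeas : Measurable ρ)
    (hbound : ∀ x ∈ Set.Icc (0:ℝ) 1, C⁻¹ * x ^ a ≤ ρ x ∧ ρ x ≤ C * x ^ a)
    (γ ε : ℝ) (hγ : a / (a + 1) < γ) (hε : 0 < ε) :
    Summable (fun k : ℕ =>
      ∫ x in (0:ℝ)..1, ρ x * Real.exp (-ε * ((k + 1 : ℕ) : ℝ) ^ γ * ρ x)) := by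
  have ha1 : (0:ℝ) < a + 1 := by linarith
  have hγ0 : 0 < γ := lt_trans (div_pos ha ha1) hγ
  -- choose exponent p with  max (1/γ - 1) 0 < p < 1/a
  set m : ℝ := max (1/γ - 1) 0 with hm_def
  have haγ : a < γ * (a + 1) := by
    rw [div_lt_iff₀ ha1] at hγ; linarith
  have hm_lt : m < 1/a := by
    have h1 : 1/γ - 1 < 1/a := by
      have h2 : 1/γ < (a+1)/a := by
        rw [div_lt_div_iff₀ hγ0 ha]; linarith
      have h3 : (a+1)/a = 1/a + 1 := by field_simp; ring
      linarith
    exact max_lt h1 (by positivity)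
  set p : ℝ := (1/a + m)/2 with hp_def
  have hm0 : 0 ≤ m := le_max_right _ _
  have hp0 : 0 < p := by
    have : (0:ℝ) < 1/a := by positivity
    simp only [hp_def]; linarith
  have hmp : m < p := by simp only [hp_def]; linarith
  have hp_lt : p < 1/a := by simp only [hp_def]; linarith
  have hap1 : a * p < 1 := by
    have := (mul_lt_mul_iff_right₀ ha).mpr hp_lt
    rwa [mul_one_div, div_self ha.ne'] at this
  have hap0 : 0 < a * p := by positivity
  obtain ⟨M, hM0, hM⟩ := aux_rpow_mul_exp_neg_le (1 + p) (by linarith)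
  set s : ℝ := γ * (1 + p) with hs_def
  have hs1 : 1 < s := by
    have h1 : 1/γ - 1 < p := lt_of_le_of_lt (le_max_left _ _) hmp
    have h2 : 1/γ < 1 + p := by linarith
    calc (1:ℝ) = γ * (1/γ) := by field_simp
      _ < γ * (1 + p) := (mul_lt_mul_iff_right₀ hγ0).mpr h2
  -- the comparison integral
  have hrint : IntervalIntegrable (fun x : ℝ => x ^ (-(a*p))) volume 0 1 :=
    intervalIntegral.intervalIntegrable_rpow' (by linarith)
  set I : ℝ := ∫ x in (0:ℝ)..1, x ^ (-(a*p)) with hI_def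
  set B : ℝ := M * C ^ p * ε ^ (-(1+p)) * I with hB_def
  -- per k bounds
  have key : ∀ k : ℕ,
      (∫ x in (0:ℝ)..1, ρ x * Real.exp (-ε * ((k + 1 : ℕ) : ℝ) ^ γ * ρ x))
        ≤ B * ((k+1 : ℕ) : ℝ) ^ (-s) ∧
      0 ≤ ∫ x in (0:ℝ)..1, ρ x * Real.exp (-ε * ((k + 1 : ℕ) : ℝ) ^ γ * ρ x) := by
    intro k
    set K : ℝ := ((k+1 : ℕ) : ℝ) with hK_def
    have hK1 : (1:ℝ) ≤ K := by
      rw [hK_def]; exact_mod_cast Nat.succ_le_succ (Nat.zero_le k)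
    have hK0 : (0:ℝ) < K := lt_of_lt_of_le zero_lt_one hK1
    set lam : ℝ := ε * K ^ γ with hlam_def
    have hlam0 : 0 < lam := by positivity
    -- nonnegativity of rho on [0,1]
    have hρ0 : ∀ x ∈ Set.Icc (0:ℝ) 1, 0 ≤ ρ x := fun x hx =>
      le_trans (mul_nonneg (inv_nonneg.mpr hC.le) (Real.rpow_nonneg hx.1 a)) ((hbound x hx).1)
    set f : ℝ → ℝ := fun x => ρ x * Real.exp (-ε * K ^ γ * ρ x) with hf_def
    have hf_nonneg : ∀ x ∈ Set.Icc (0:ℝ) 1, 0 ≤ f x := fun x hx =>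
      mul_nonneg (hρ0 x hx) (Real.exp_pos _).le
    -- pointwise bound
    set g : ℝ → ℝ := fun x => M * C ^ p * lam ^ (-(1+p)) * x ^ (-(a*p)) with hg_def
    have hfg : ∀ x ∈ Set.Icc (0:ℝ) 1, f x ≤ g x := by
      intro x hx
      rcases eq_or_lt_of_le hx.1 with h0 | h0
      · -- x = 0
        have hx0 : x = 0 := h0.symm
        subst hx0
        have hρx : ρ 0 = 0 := by
          have h1 := (hbound 0 hx).2
          have h2 := hρ0 0 hx
          rw [Real.zero_rpow ha.ne'] at h1
          nlinarith
        have hfx : f 0 = 0 := by rw [hf_def]; simp [hρx]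
        have hgx : g 0 = 0 := by
          rw [hg_def]; simp [Real.zero_rpow (neg_ne_zero.mpr hap0.ne')]
        rw [hfx, hgx]
      · -- x > 0
        have htpos : 0 < ρ x := lt_of_lt_of_le (by positivity) (hbound x hx).1
        set t : ℝ := ρ x with ht_def
        have step1 : t * Real.exp (-ε * K ^ γ * t) ≤ M * lam ^ (-(1+p)) * t ^ (-p) := by
          have harg : -ε * K ^ γ * t = -(lam * t) := by rw [hlam_def]; ring
          rw [harg]
          have hMu := hM (lam * t) (by positivity)
          have halg : t = lam ^ (-(1+p)) * t ^ (-p) * ((lam * t) ^ (1+p)) := by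
            rw [Real.mul_rpow hlam0.le htpos.le,
              show lam ^ (-(1+p)) * t ^ (-p) * (lam ^ (1+p) * t ^ (1+p))
                = (lam ^ (-(1+p)) * lam ^ (1+p)) * (t ^ (-p) * t ^ (1+p)) from by ring,
              ← Real.rpow_add hlam0, ← Real.rpow_add htpos,
              show -(1+p) + (1+p) = 0 from by ring,
              show -p + (1+p) = 1 from by ring,
              Real.rpow_zero, Real.rpow_one, one_mul]
          calc t * Real.exp (-(lam * t))
              = lam ^ (-(1+p)) * t ^ (-p) * ((lam * t) ^ (1+p) * Real.exp (-(lam * t))) := by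
                nth_rewrite 1 [halg]; ring
            _ ≤ lam ^ (-(1+p)) * t ^ (-p) * M :=
                mul_le_mul_of_nonneg_left hMu (by positivity)
            _ = M * lam ^ (-(1+p)) * t ^ (-p) := by ring
        have step2 : t ^ (-p) ≤ C ^ p * x ^ (-(a*p)) := by
          have h1 : t ^ (-p) ≤ (C⁻¹ * x ^ a) ^ (-p) :=
            Real.rpow_le_rpow_of_nonpos (by positivity) (hbound x hx).1 (by linarith)
          have h2 : (C⁻¹ * x ^ a) ^ (-p) = C ^ p * x ^ (-(a*p)) := by
            rw [Real.mul_rpow (by positivity) (Real.rpow_nonneg hx.1 a),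
              show -(a*p) = a * (-p) from by ring,
              Real.rpow_mul hx.1, Real.inv_rpow hC.le,
              Real.rpow_neg hC.le, inv_inv]
          linarith [h1, h2.le]
        calc f x = t * Real.exp (-ε * K ^ γ * t) := rfl
          _ ≤ M * lam ^ (-(1+p)) * t ^ (-p) := step1
          _ ≤ M * lam ^ (-(1+p)) * (C ^ p * x ^ (-(a*p))) :=
              mul_le_mul_of_nonneg_left step2 (by positivity)
          _ = g x := by rw [hg_def]; ring
    -- integrability of f
    have hfmeas : Measurable f := hmeas.mul ((measurable_const.mul hmeas).exp)
    have hfint : IntervalIntegrable f volume 0 1 := by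
      rw [intervalIntegrable_iff_integrableOn_Ioc_of_le zero_le_one]
      apply Integrable.mono' (integrable_const C) hfmeas.aestronglyMeasurable
      rw [ae_restrict_iff' measurableSet_Ioc]
      apply Filter.Eventually.of_forall
      intro x hx
      have hx' : x ∈ Set.Icc (0:ℝ) 1 := ⟨hx.1.le, hx.2⟩
      rw [Real.norm_eq_abs, abs_of_nonneg (hf_nonneg x hx')]
      have h1 : ρ x ≤ C := by
        have h1' := (hbound x hx').2
        have h2' : x ^ a ≤ 1 := Real.rpow_le_one hx'.1 hx'.2 ha.le
        nlinarith
      have h2 : Real.exp (-ε * K ^ γ * ρ x) ≤ 1 := by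
        apply Real.exp_le_one_iff.mpr
        have h3 := hρ0 x hx'
        have hKγ : 0 ≤ K ^ γ := by positivity
        nlinarith
      calc f x ≤ ρ x * 1 := mul_le_mul_of_nonneg_left h2 (hρ0 x hx')
        _ ≤ C := by rw [mul_one]; exact h1
    have hgint : IntervalIntegrable g volume 0 1 := hrint.const_mul _
    have hle : (∫ x in (0:ℝ)..1, f x) ≤ ∫ x in (0:ℝ)..1, g x :=
      intervalIntegral.integral_mono_on zero_le_one hfint hgint hfg
    have hgval : (∫ x in (0:ℝ)..1, g x) = M * C ^ p * lam ^ (-(1+p)) * I := by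
      rw [hI_def, ← intervalIntegral.integral_const_mul]
    have hlamval : lam ^ (-(1+p)) = ε ^ (-(1+p)) * K ^ (-s) := by
      rw [hlam_def, Real.mul_rpow hε.le (by positivity), ← Real.rpow_mul hK0.le]
      congr 1
      rw [hs_def]; ring
    constructor
    · refine le_trans hle (le_of_eq ?_)
      rw [hgval, hlamval, hB_def]; ring
    · exact intervalIntegral.integral_nonneg zero_le_one hf_nonneg
  -- comparison
  have hsum : Summable (fun k : ℕ => B * ((k+1 : ℕ) : ℝ) ^ (-s)) := by
    apply Summable.mul_left
    have h1 : Summable (fun n : ℕ => (n : ℝ) ^ (-s)) :=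
      Real.summable_nat_rpow.mpr (by linarith)
    have h2 : Summable ((fun n : ℕ => (n : ℝ) ^ (-s)) ∘ (fun k : ℕ => k + 1)) :=
      h1.comp_injective (add_left_injective 1)
    exact h2
  exact Summable.of_nonneg_of_le (fun k => (key k).2) (fun k => (key k).1) hsum
end

section
/- The map f(x) = 1 − 2√|x| on [−1,1] preserves the measure with density ρ(x) = (1−x)/2: for every interval [a,b] ⊂ [−1,1], μ(f^{−1}[a,b]) = μ([a,b]), where μ(A) = ∫_A (1−x)/2 dx. -/
open MeasureTheory

lemma cusp_interval_int (u v : ℝ) :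
    ∫ x in u..v, (1 - x) / 2 = (v - u) / 2 - (v ^ 2 - u ^ 2) / 4 := by
  have h : ∀ x : ℝ, (1 - x) / 2 = 1 / 2 - x / 2 := by intro x; ring
  simp only [h]
  rw [intervalIntegral.integral_sub intervalIntegrable_const
      (intervalIntegral.intervalIntegrable_id.div_const 2),
    intervalIntegral.integral_div, intervalIntegral.integral_div, integral_id,
    intervalIntegral.integral_const]
  simp [smul_eq_mul]
  ring

lemma cusp_Icc_int (u v : ℝ) (huv : u ≤ v) :
    ∫ x in Set.Icc u v, (1 - x) / 2 = (v - u) / 2 - (v ^ 2 - u ^ 2) / 4 := by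
  rw [MeasureTheory.integral_Icc_eq_integral_Ioc, ← intervalIntegral.integral_of_le huv,
    cusp_interval_int]

lemma cusp_Ioo_int (u v : ℝ) (huv : u ≤ v) :
    ∫ x in Set.Ioo u v, (1 - x) / 2 = (v - u) / 2 - (v ^ 2 - u ^ 2) / 4 := by
  rw [← MeasureTheory.integral_Ioc_eq_integral_Ioo, ← intervalIntegral.integral_of_le huv,
    cusp_interval_int]

theorem cusp_map_preserves_density
    (f : ℝ → ℝ) (hf : ∀ x, f x = 1 - 2 * Real.sqrt |x|)
    (a b : ℝ) (ha : -1 ≤ a) (hab : a ≤ b) (hb : b ≤ 1) :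
    ∫ x in {x ∈ Set.Icc (-1:ℝ) 1 | f x ∈ Set.Icc a b}, (1 - x) / 2
      = ∫ x in Set.Icc a b, (1 - x) / 2 := by
  set p : ℝ := ((1 - b) / 2) ^ 2 with hp
  set q : ℝ := ((1 - a) / 2) ^ 2 with hq
  have hb' : 0 ≤ (1 - b) / 2 := by linarith
  have ha' : 0 ≤ (1 - a) / 2 := by linarith
  have hpq : p ≤ q := by nlinarith
  have hq1 : q ≤ 1 := by nlinarith
  have hp0 : 0 ≤ p := sq_nonneg _
  -- the preimage set
  have hset : {x ∈ Set.Icc (-1:ℝ) 1 | f x ∈ Set.Icc a b}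
      = Set.Icc (-q) q \ Set.Ioo (-p) p := by
    ext x
    have hs0 : 0 ≤ Real.sqrt |x| := Real.sqrt_nonneg _
    have hsq : Real.sqrt |x| ^ 2 = |x| := Real.sq_sqrt (abs_nonneg x)
    simp only [Set.mem_setOf_eq, Set.mem_Icc, Set.mem_diff, Set.mem_Ioo, hf, not_and, not_lt]
    constructor
    · rintro ⟨⟨_, _⟩, h1, h2⟩
      have hu : Real.sqrt |x| ≤ (1 - a) / 2 := by linarith
      have hl : (1 - b) / 2 ≤ Real.sqrt |x| := by linarith
      have hxq : |x| ≤ q := by nlinarith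
      have hxp : p ≤ |x| := by nlinarith
      have h3 := abs_le.mp hxq
      rcases le_abs.mp hxp with h | h
      · exact ⟨⟨h3.1, h3.2⟩, fun hc => by linarith⟩
      · exact ⟨⟨h3.1, h3.2⟩, fun hc => by linarith⟩
    · rintro ⟨⟨hxl, hxr⟩, hnot⟩
      have hxq : |x| ≤ q := abs_le.mpr ⟨hxl, hxr⟩
      have hxp : p ≤ |x| := by
        rcases le_or_gt (-p) x with h | h
        · rcases eq_or_lt_of_le h with h' | h'
          · exact le_abs.mpr (Or.inr (by linarith))
          · exact le_abs.mpr (Or.inl (hnot h'))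
        · exact le_abs.mpr (Or.inr (by linarith))
      have hu : Real.sqrt |x| ≤ (1 - a) / 2 := by
        calc Real.sqrt |x| ≤ Real.sqrt q := Real.sqrt_le_sqrt hxq
          _ = (1 - a) / 2 := Real.sqrt_sq ha'
      have hl : (1 - b) / 2 ≤ Real.sqrt |x| := by
        calc (1 - b) / 2 = Real.sqrt p := (Real.sqrt_sq hb').symm
          _ ≤ Real.sqrt |x| := Real.sqrt_le_sqrt hxp
      have hx1 : |x| ≤ 1 := le_trans hxq hq1
      have h3 := abs_le.mp hx1
      exact ⟨⟨h3.1, h3.2⟩, by linarith, by linarith⟩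
  rw [hset]
  have hqq : -q ≤ q := by linarith
  have hpp : -p ≤ p := by linarith
  have hsub : Set.Ioo (-p) p ⊆ Set.Icc (-q) q := fun x hx =>
    ⟨by linarith [hx.1], by linarith [hx.2]⟩
  have hint : IntegrableOn (fun x : ℝ => (1 - x) / 2) (Set.Icc (-q) q) volume :=
    (Continuous.integrableOn_Icc (by continuity))
  rw [MeasureTheory.integral_diff measurableSet_Ioo hint hsub,
    cusp_Icc_int _ _ hqq, cusp_Ioo_int _ _ hpp, cusp_Icc_int _ _ hab]
  rw [hp, hq]
  ring
end
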